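/- Let p_1,...,p_n ∈ ℝ^m be reconstructible from distances with not all points equal, and set d_{{i,j}} = ‖p_i − p_j‖², d_max = max of d_{{i,j}} over all pairs. Let q_1,...,q_n ∈ ℝ^m with not all points equal and d'_{{i,j}}, d'_max defined analogously. Then the multisets { d_{{i,j}}/d_max } and { d'_{{i,j}}/d'_max } are equal if and only if there exist a rigid motion (M,T), a scalar λ ≠ 0, and a permutation π of {1,...,n} such that λ(M p_i + T) = q_{π(i)} for all i. -/

import Mathlib

/-- The distribution of squared pairwise distances of an `n`-point configuration in `ℝ^m`. -/
noncomputable def sqDistDistribution {m n : ℕ} (p : Fin n → EuclideanSpace ℝ (Fin m)) :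
    Multiset ℝ :=
  (((Finset.univ : Finset (Sym2 (Fin n))).filter fun z => ¬ z.IsDiag).val).map
    (Sym2.lift ⟨fun i j => dist (p i) (p j) ^ 2, fun _ _ => by simp [dist_comm]⟩)

/-- The maximal squared pairwise distance of a configuration. -/
noncomputable def dmax {m n : ℕ} (p : Fin n → EuclideanSpace ℝ (Fin m)) : ℝ :=
  sSup (Set.range fun ij : Fin n × Fin n => dist (p ij.1) (p ij.2) ^ 2)

/-- Reconstructibility from distances in `ℝ^m`. -/
def ReconstructibleFromDistances {m n : ℕ} (p : Fin n → EuclideanSpace ℝ (Fin m)) : Prop :=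
  ∀ q : Fin n → EuclideanSpace ℝ (Fin m), sqDistDistribution q = sqDistDistribution p →
    ∃ M : Matrix (Fin m) (Fin m) ℝ, M ∈ Matrix.orthogonalGroup (Fin m) ℝ ∧
      ∃ T : EuclideanSpace ℝ (Fin m), ∃ π : Equiv.Perm (Fin n),
        ∀ i, (WithLp.equiv 2 (Fin m → ℝ)).symm (M.mulVec (p i)) + T = q (π i)

open Matrix in
/-- An orthogonal matrix preserves the Euclidean norm. -/
lemma normMV_aux18 {m : ℕ} {M : Matrix (Fin m) (Fin m) ℝ}
    (hM : M ∈ Matrix.orthogonalGroup (Fin m) ℝ) (x : Fin m → ℝ) :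
    ‖(WithLp.equiv 2 (Fin m → ℝ)).symm (M.mulVec x)‖ = ‖(WithLp.equiv 2 (Fin m → ℝ)).symm x‖ := by
  have h1 : Mᵀ * M = 1 := by
    have := (Matrix.mem_orthogonalGroup_iff' (Fin m) ℝ).mp hM
    simpa using this
  have key : (M.mulVec x) ⬝ᵥ (M.mulVec x) = x ⬝ᵥ x := by
    rw [Matrix.dotProduct_mulVec]
    congr 1
    rw [← Matrix.mulVec_transpose, Matrix.mulVec_mulVec, h1, Matrix.one_mulVec]
  have hsq : ∀ y : Fin m → ℝ, ‖(WithLp.equiv 2 (Fin m → ℝ)).symm y‖ ^ 2 = y ⬝ᵥ y := by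
    intro y
    rw [← real_inner_self_eq_norm_sq]
    simp only [PiLp.inner_apply, PiLp.toLp_apply, dotProduct, RCLike.inner_apply, conj_trivial]
    rfl
  have h3 := hsq (M.mulVec x)
  rw [key, ← hsq x] at h3
  have := congrArg Real.sqrt h3
  rwa [Real.sqrt_sq (norm_nonneg _), Real.sqrt_sq (norm_nonneg _)] at this

/-- The distance between images under a similarity. -/
lemma dist_aux18 {m : ℕ} {M : Matrix (Fin m) (Fin m) ℝ}
    (hM : M ∈ Matrix.orthogonalGroup (Fin m) ℝ)
    (T : EuclideanSpace ℝ (Fin m)) (lam : ℝ) (x y : EuclideanSpace ℝ (Fin m)) :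
    dist (lam • ((WithLp.equiv 2 (Fin m → ℝ)).symm (M.mulVec x) + T))
       (lam • ((WithLp.equiv 2 (Fin m → ℝ)).symm (M.mulVec y) + T)) = |lam| * dist x y := by
  rw [dist_smul₀, Real.norm_eq_abs, dist_add_right]
  congr 1
  rw [dist_eq_norm, show ∀ a b : Fin m → ℝ, (WithLp.equiv 2 (Fin m → ℝ)).symm a - (WithLp.equiv 2 (Fin m → ℝ)).symm b = (WithLp.equiv 2 (Fin m → ℝ)).symm (a - b) from fun _ _ => rfl, ← Matrix.mulVec_sub, normMV_aux18 hM]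
  rw [dist_eq_norm]; rfl

/-- Scaling of the squared-distance distribution. -/
lemma sqDD_scale_aux18 {m n : ℕ} {f g : Fin n → EuclideanSpace ℝ (Fin m)} {c : ℝ}
    (h : ∀ i j, dist (g i) (g j) ^ 2 = c * dist (f i) (f j) ^ 2) :
    sqDistDistribution g = (sqDistDistribution f).map (fun d => c * d) := by
  unfold sqDistDistribution
  rw [Multiset.map_map]
  apply Multiset.map_congr rfl
  intro z _
  induction z using Sym2.ind with
  | _ i j => simp [Sym2.lift_mk, h i j]

/-- Permutation invariance of the squared-distance distribution. -/
lemma sqDD_perm_aux18 {m n : ℕ} (f : Fin n → EuclideanSpace ℝ (Fin m)) (π : Equiv.Perm (Fin n)) :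
    sqDistDistribution (f ∘ π) = sqDistDistribution f := by
  classical
  unfold sqDistDistribution
  set F := Sym2.lift ⟨fun i j => dist (f i) (f j) ^ 2, fun _ _ => by simp [dist_comm]⟩ with hF
  set e : Sym2 (Fin n) ≃ Sym2 (Fin n) :=
    { toFun := Sym2.map π
      invFun := Sym2.map π.symm
      left_inv := fun z => by rw [Sym2.map_map]; simp [Sym2.map_id']
      right_inv := fun z => by rw [Sym2.map_map]; simp [Sym2.map_id'] } with he
  set S : Finset (Sym2 (Fin n)) := (Finset.univ.filter fun z => ¬ z.IsDiag) with hS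
  have hmapS : Finset.map e.toEmbedding S = S := by
    ext z
    simp only [hS, Finset.mem_map_equiv, Finset.mem_filter, Finset.mem_univ, true_and, he]
    exact not_congr (Sym2.isDiag_map (π.symm.injective))
  have hfun : (Sym2.lift ⟨fun i j => dist ((f ∘ π) i) ((f ∘ π) j) ^ 2,
      fun _ _ => by simp [dist_comm]⟩ : Sym2 (Fin n) → ℝ) = F ∘ e := by
    funext z
    induction z using Sym2.ind with
    | _ i j => simp [hF, he, Sym2.lift_mk, Sym2.map_pair_eq]
  rw [hfun]
  calc S.val.map (F ∘ e) = (S.val.map e).map F := by rw [Multiset.map_map]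
    _ = (Finset.map e.toEmbedding S).val.map F := by rw [Finset.map_val]; rfl
    _ = S.val.map F := by rw [hmapS]

/-- `sSup` of a finite nonempty set of reals scaled by a nonnegative constant. -/
lemma sSup_scale_aux18 {S : Set ℝ} (hfin : S.Finite) (hne : S.Nonempty) {c : ℝ} (hc : 0 ≤ c) :
    sSup ((fun d => c * d) '' S) = c * sSup S := by
  apply le_antisymm
  · apply csSup_le (hne.image _)
    rintro y ⟨x, hx, rfl⟩
    exact mul_le_mul_of_nonneg_left (le_csSup hfin.bddAbove hx) hc
  · have : sSup S ∈ S := hne.csSup_mem hfin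
    exact le_csSup (hfin.image _).bddAbove ⟨sSup S, this, rfl⟩

lemma dmax_pos_aux18 {m n : ℕ} {p : Fin n → EuclideanSpace ℝ (Fin m)} (hp : ∃ i j, p i ≠ p j) :
    0 < dmax p := by
  obtain ⟨i, j, hij⟩ := hp
  have hd : 0 < dist (p i) (p j) ^ 2 := pow_pos (dist_pos.mpr hij) 2
  calc (0:ℝ) < dist (p i) (p j) ^ 2 := hd
    _ ≤ _ := le_csSup (Set.finite_range _).bddAbove ⟨(i, j), rfl⟩

theorem stmt_18 (m n : ℕ) (p q : Fin n → EuclideanSpace ℝ (Fin m))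
    (hrec : ReconstructibleFromDistances p)
    (hp : ∃ i j, p i ≠ p j) (hq : ∃ i j, q i ≠ q j) :
    (sqDistDistribution p).map (fun d => d / dmax p) =
        (sqDistDistribution q).map (fun d => d / dmax q) ↔
      ∃ M : Matrix (Fin m) (Fin m) ℝ, M ∈ Matrix.orthogonalGroup (Fin m) ℝ ∧
        ∃ T : EuclideanSpace ℝ (Fin m), ∃ lam : ℝ, lam ≠ 0 ∧ ∃ π : Equiv.Perm (Fin n),
          ∀ i, lam • ((WithLp.equiv 2 (Fin m → ℝ)).symm (M.mulVec (p i)) + T) = q (π i) := by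
  have ha : 0 < dmax p := dmax_pos_aux18 hp
  have hb : 0 < dmax q := dmax_pos_aux18 hq
  haveI : Nonempty (Fin n) := ⟨hp.choose⟩
  constructor
  · intro h
    set s : ℝ := Real.sqrt (dmax p / dmax q) with hs
    have hspos : 0 < s := Real.sqrt_pos.mpr (div_pos ha hb)
    have hs2 : s ^ 2 = dmax p / dmax q := Real.sq_sqrt (le_of_lt (div_pos ha hb))
    have hq' : sqDistDistribution (fun i => s • q i) = sqDistDistribution p := by
      have h1 : ∀ i j, dist (s • q i) (s • q j) ^ 2
          = (dmax p / dmax q) * dist (q i) (q j) ^ 2 := by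
        intro i j
        rw [dist_smul₀, mul_pow, Real.norm_eq_abs, sq_abs, hs2]
      rw [sqDD_scale_aux18 h1]
      have h2 := congrArg (Multiset.map (fun d => d * dmax p)) h
      rw [Multiset.map_map, Multiset.map_map] at h2
      have e1 : ((fun d => d * dmax p) ∘ fun d : ℝ => d / dmax p) = id := by
        funext d
        simp only [Function.comp, id]
        field_simp
      have e2 : ((fun d => d * dmax p) ∘ fun d : ℝ => d / dmax q)
          = fun d => (dmax p / dmax q) * d := by
        funext d
        simp only [Function.comp]
        field_simp
      rw [e1, e2, Multiset.map_id] at h2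
      exact h2.symm
    obtain ⟨M, hM, T, π, hπ⟩ := hrec _ hq'
    refine ⟨M, hM, T, s⁻¹, inv_ne_zero hspos.ne', π, fun i => ?_⟩
    rw [hπ i, smul_smul, inv_mul_cancel₀ hspos.ne', one_smul]
  · rintro ⟨M, hM, T, lam, hlam, π, hπ⟩
    have hdist : ∀ i j, dist (q (π i)) (q (π j)) ^ 2 = lam ^ 2 * dist (p i) (p j) ^ 2 := by
      intro i j
      rw [← hπ i, ← hπ j, dist_aux18 hM, mul_pow, sq_abs]
    have hlam2 : (0:ℝ) < lam ^ 2 := by positivity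
    have hdq : dmax q = lam ^ 2 * dmax p := by
      unfold dmax
      have hr : (Set.range fun ij : Fin n × Fin n => dist (q ij.1) (q ij.2) ^ 2)
          = (fun d => lam ^ 2 * d) ''
            (Set.range fun ij : Fin n × Fin n => dist (p ij.1) (p ij.2) ^ 2) := by
        rw [← Set.range_comp,
          ← (π.prodCongr π).surjective.range_comp
            (fun ij : Fin n × Fin n => dist (q ij.1) (q ij.2) ^ 2)]
        apply congrArg Set.range
        funext ij
        simp [Function.comp, Equiv.prodCongr_apply, Prod.map, hdist]
      rw [hr, sSup_scale_aux18 (Set.finite_range _) (Set.range_nonempty _) hlam2.le]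
    have hqq : sqDistDistribution q = (sqDistDistribution p).map (fun d => lam ^ 2 * d) := by
      rw [← sqDD_perm_aux18 q π]
      exact sqDD_scale_aux18 (fun i j => hdist i j)
    rw [hqq, hdq, Multiset.map_map]
    apply Multiset.map_congr rfl
    intro d _
    simp only [Function.comp]
    rw [mul_div_mul_left d (dmax p) hlam2.ne']
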